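/- arXiv:1709.02461 — 6 statements merged into one kernel-verified Lean document; each statement's English description precedes it below -/
import Mathlib

section
/- Let A be Metzler and suppose ζ > 0 with Aζ < 0 and z > 0 with zᵀA < 0 (entrywise). Define the diagonal matrix P with P_{ii} = z_i/ζ_i. Then P is positive definite and AᵀP + PA is negative definite. -/
open Matrix Finset

/-- AM-GM style bound used termwise. -/
lemma amgm_aux (a b u v : ℝ) (ha : 0 < a) (hb : 0 < b) :
    u * v ≤ (u ^ 2 * b / a + v ^ 2 * a / b) / 2 := by
  rw [div_add_div _ _ (ne_of_gt ha) (ne_of_gt hb), le_div_iff₀ (by positivity),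
    le_div_iff₀ (by positivity)]
  nlinarith [sq_nonneg (u * b - v * a), mul_pos ha hb]

/-- A symmetric Metzler matrix S with Sζ < 0 for some ζ > 0 has -S positive definite. -/
lemma neg_posDef_of_metzler {n : ℕ} (S : Matrix (Fin n) (Fin n) ℝ)
    (hsym : Sᵀ = S) (hoff : ∀ i j, i ≠ j → 0 ≤ S i j)
    (ζ : Fin n → ℝ) (hζ : ∀ i, 0 < ζ i) (hSζ : ∀ i, S.mulVec ζ i < 0) :
    (-S).PosDef := by
  rw [posDef_iff_dotProduct_mulVec]
  constructor
  · show (-S)ᴴ = -S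
    ext i j
    have h := congrFun (congrFun hsym i) j
    rw [transpose_apply] at h
    simp [conjTranspose_apply, h]
  · intro x hx
    have key : x ⬝ᵥ S.mulVec x < 0 := by
      have h1 : x ⬝ᵥ S.mulVec x = ∑ i, ∑ j, x i * (S i j * x j) := by
        simp [dotProduct, mulVec, Finset.mul_sum]
      -- the quadratic bound, termwise
      have h2 : ∀ i j, x i * (S i j * x j) ≤
          S i j * ((x i) ^ 2 * ζ j / ζ i + (x j) ^ 2 * ζ i / ζ j) / 2 := by
        intro i j
        rcases eq_or_ne i j with rfl | hij
        · have hzi : ζ i ≠ 0 := ne_of_gt (hζ i)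
          have hcan : (x i) ^ 2 * ζ i / ζ i = x i ^ 2 := by field_simp
          rw [hcan]
          exact le_of_eq (by ring)
        · have := amgm_aux (ζ i) (ζ j) (x i) (x j) (hζ i) (hζ j)
          have h0 := hoff i j hij
          calc x i * (S i j * x j) = S i j * (x i * x j) := by ring
            _ ≤ S i j * (((x i) ^ 2 * ζ j / ζ i + (x j) ^ 2 * ζ i / ζ j) / 2) := by
                exact mul_le_mul_of_nonneg_left this h0
            _ = S i j * ((x i) ^ 2 * ζ j / ζ i + (x j) ^ 2 * ζ i / ζ j) / 2 := by ring
      -- the bound sums to ∑ i, (x i ^ 2 / ζ i) * (Sζ) i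
      have h3 : ∑ i, ∑ j, S i j * ((x i) ^ 2 * ζ j / ζ i + (x j) ^ 2 * ζ i / ζ j) / 2
          = ∑ i, (x i) ^ 2 / ζ i * (S.mulVec ζ i) := by
        have hswap : ∑ i, ∑ j, S i j * ((x j) ^ 2 * ζ i / ζ j)
            = ∑ i, ∑ j, S i j * ((x i) ^ 2 * ζ j / ζ i) := by
          rw [Finset.sum_comm]
          refine Finset.sum_congr rfl fun j _ => Finset.sum_congr rfl fun i _ => ?_
          have h := congrFun (congrFun hsym j) i
          rw [transpose_apply] at h
          rw [h]
        calc ∑ i, ∑ j, S i j * ((x i) ^ 2 * ζ j / ζ i + (x j) ^ 2 * ζ i / ζ j) / 2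
            = (∑ i, ∑ j, S i j * ((x i) ^ 2 * ζ j / ζ i)
              + ∑ i, ∑ j, S i j * ((x j) ^ 2 * ζ i / ζ j)) / 2 := by
              rw [add_div, Finset.sum_div, Finset.sum_div, ← Finset.sum_add_distrib]
              refine Finset.sum_congr rfl fun i _ => ?_
              rw [Finset.sum_div, Finset.sum_div, ← Finset.sum_add_distrib]
              exact Finset.sum_congr rfl fun j _ => by ring
          _ = ∑ i, ∑ j, S i j * ((x i) ^ 2 * ζ j / ζ i) := by rw [hswap]; ring
          _ = ∑ i, (x i) ^ 2 / ζ i * (S.mulVec ζ i) := by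
              refine Finset.sum_congr rfl fun i _ => ?_
              rw [mulVec, dotProduct, Finset.mul_sum]
              exact Finset.sum_congr rfl fun j _ => by ring
      have h4 : ∑ i, (x i) ^ 2 / ζ i * (S.mulVec ζ i) < 0 := by
        obtain ⟨i0, hi0⟩ := Function.ne_iff.mp hx
        have hle : ∀ i ∈ Finset.univ, (x i) ^ 2 / ζ i * (S.mulVec ζ i) ≤ (fun _ => (0:ℝ)) i :=
          fun i _ => mul_nonpos_of_nonneg_of_nonpos
            (div_nonneg (sq_nonneg _) (le_of_lt (hζ i))) (le_of_lt (hSζ i))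
        have hx2 : 0 < (x i0) ^ 2 / ζ i0 :=
          div_pos (lt_of_le_of_ne (sq_nonneg _) (Ne.symm (pow_ne_zero 2 hi0))) (hζ i0)
        have hstrict : (x i0) ^ 2 / ζ i0 * (S.mulVec ζ i0) < (fun _ => (0:ℝ)) i0 :=
          mul_neg_of_pos_of_neg hx2 (hSζ i0)
        have := Finset.sum_lt_sum hle ⟨i0, Finset.mem_univ i0, hstrict⟩
        simpa using this
      calc x ⬝ᵥ S.mulVec x = ∑ i, ∑ j, x i * (S i j * x j) := h1
        _ ≤ ∑ i, ∑ j, S i j * ((x i) ^ 2 * ζ j / ζ i + (x j) ^ 2 * ζ i / ζ j) / 2 :=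
            Finset.sum_le_sum fun i _ => Finset.sum_le_sum fun j _ => h2 i j
        _ = ∑ i, (x i) ^ 2 / ζ i * (S.mulVec ζ i) := h3
        _ < 0 := h4
    have : star x ⬝ᵥ (-S).mulVec x = -(x ⬝ᵥ S.mulVec x) := by
      simp [neg_mulVec]
    rw [this]
    linarith

/-- For a Metzler A with ζ > 0, Aζ < 0 and z > 0, zᵀA < 0, the diagonal matrix
P with P_{ii} = z_i / ζ_i is positive definite and AᵀP + PA is negative definite. -/
theorem metzler_diagonal_lyapunov {n : ℕ} (A : Matrix (Fin n) (Fin n) ℝ)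
    (hMetzler : ∀ i j, i ≠ j → 0 ≤ A i j)
    (ζ z : Fin n → ℝ) (hζ : ∀ i, 0 < ζ i) (hAζ : ∀ i, A.mulVec ζ i < 0)
    (hz : ∀ i, 0 < z i) (hzA : ∀ j, A.vecMul z j < 0) :
    (Matrix.diagonal (fun i => z i / ζ i)).PosDef ∧
    (-(Aᵀ * Matrix.diagonal (fun i => z i / ζ i) +
        Matrix.diagonal (fun i => z i / ζ i) * A)).PosDef := by
  set d : Fin n → ℝ := fun i => z i / ζ i with hd
  have hdpos : ∀ i, 0 < d i := fun i => div_pos (hz i) (hζ i)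
  refine ⟨Matrix.posDef_diagonal_iff.mpr hdpos, ?_⟩
  set S := Aᵀ * Matrix.diagonal d + Matrix.diagonal d * A with hS
  apply neg_posDef_of_metzler S _ _ ζ hζ
  · -- Sζ < 0
    intro i
    have hdz : (Matrix.diagonal d).mulVec ζ = z := by
      funext i
      rw [mulVec_diagonal]
      exact div_mul_cancel₀ (z i) (ne_of_gt (hζ i))
    have : S.mulVec ζ = Aᵀ.mulVec z + fun i => d i * (A.mulVec ζ i) := by
      rw [hS, add_mulVec, ← mulVec_mulVec, ← mulVec_mulVec, hdz]
      congr 1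
      funext i
      rw [mulVec_diagonal]
    rw [this]
    have h1 : Aᵀ.mulVec z i < 0 := by rw [mulVec_transpose]; exact hzA i
    have h2 : d i * (A.mulVec ζ i) < 0 := mul_neg_of_pos_of_neg (hdpos i) (hAζ i)
    simpa using add_neg h1 h2
  · -- symmetry
    rw [hS, transpose_add, transpose_mul, transpose_mul, transpose_transpose,
      diagonal_transpose, add_comm]
  · -- Metzler off-diagonal
    intro i j hij
    rw [hS]
    simp only [Matrix.add_apply, Matrix.mul_diagonal, Matrix.diagonal_mul, transpose_apply]
    have h1 : 0 ≤ A j i * d j := mul_nonneg (hMetzler j i (Ne.symm hij)) (le_of_lt (hdpos j))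
    have h2 : 0 ≤ d i * A i j := mul_nonneg (le_of_lt (hdpos i)) (hMetzler i j hij)
    linarith
end

section
/- Let J, Q, R ∈ ℝ^{n×n} with J skew-symmetric, Q positive semidefinite, and R positive semidefinite. Then every eigenvalue of (J − R)Q has nonpositive real part. -/
open Matrix
open scoped ComplexOrder

lemma psd_map_ofReal {n : ℕ} {Q : Matrix (Fin n) (Fin n) ℝ} (hQ : Q.PosSemidef) :
    (Q.map (Complex.ofReal ·)).PosSemidef := by
  obtain ⟨B, rfl⟩ : ∃ B : Matrix (Fin n) (Fin n) ℝ, Q = Bᴴ * B := by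
    open scoped MatrixOrder in
    obtain ⟨B, hB⟩ := CStarAlgebra.nonneg_iff_eq_star_mul_self.mp hQ.nonneg
    exact ⟨B, hB⟩
  have h1 : (Bᴴ * B).map (Complex.ofReal ·) =
      (B.map (Complex.ofReal ·))ᴴ * (B.map (Complex.ofReal ·)) := by
    have := Matrix.map_mul (L := Bᴴ) (M := B) (f := Complex.ofRealHom)
    rw [show (Bᴴ * B).map (Complex.ofReal ·) = (Bᴴ * B).map Complex.ofRealHom from rfl, this]
    congr 1
    exact Matrix.conjTranspose_map Complex.ofRealHom (fun x => by simp)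
  rw [h1]
  exact Matrix.posSemidef_conjTranspose_mul_self _

/-- If J is skew-symmetric and Q, R are PSD, every eigenvalue of (J − R)Q has
nonpositive real part. -/
theorem dh_spectrum_nonpos_re {n : ℕ} (J Q R : Matrix (Fin n) (Fin n) ℝ)
    (hJ : Jᵀ = -J) (hQ : Q.PosSemidef) (hR : R.PosSemidef) :
    ∀ μ ∈ spectrum ℂ (((J - R) * Q).map (Complex.ofReal ·)), μ.re ≤ 0 := by
  intro μ hμ
  set Jc := J.map (Complex.ofReal ·) with hJc
  set Rc := R.map (Complex.ofReal ·) with hRc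
  set Qc := Q.map (Complex.ofReal ·) with hQc
  set A := ((J - R) * Q).map (Complex.ofReal ·) with hA
  have hAeq : A = (Jc - Rc) * Qc := by
    have h : Complex.ofRealHom.mapMatrix ((J - R) * Q) =
        (Complex.ofRealHom.mapMatrix J - Complex.ofRealHom.mapMatrix R) *
          Complex.ofRealHom.mapMatrix Q := by
      rw [_root_.map_mul, _root_.map_sub]
    exact h
  have hdet : (algebraMap ℂ (Matrix (Fin n) (Fin n) ℂ) μ - A).det = 0 := by
    by_contra h
    exact (spectrum.mem_iff.mp hμ) ((Matrix.isUnit_iff_isUnit_det _).mpr (isUnit_iff_ne_zero.mpr h))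
  obtain ⟨v, hv0, hveq⟩ := (Matrix.exists_mulVec_eq_zero_iff).mpr hdet
  have heig : A *ᵥ v = μ • v := by
    rw [Matrix.sub_mulVec, sub_eq_zero] at hveq
    rw [← hveq, Algebra.algebraMap_eq_smul_one, Matrix.smul_mulVec, Matrix.one_mulVec]
  have hQcP : Qc.PosSemidef := psd_map_ofReal hQ
  have hRcP : Rc.PosSemidef := psd_map_ofReal hR
  have hJskew : Jcᴴ = -Jc := by
    ext i j
    have h := congrFun (congrFun hJ i) j
    simp only [Matrix.transpose_apply, Matrix.neg_apply] at h
    simp [hJc, Matrix.conjTranspose_apply, Matrix.map_apply, Matrix.neg_apply, h]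
  set w := Qc *ᵥ v with hw
  set t := star v ⬝ᵥ w with ht
  have ht0 : 0 ≤ t := hQcP.dotProduct_mulVec_nonneg v
  have htre : 0 ≤ t.re := (Complex.le_def.mp ht0).1
  have htim : t.im = 0 := ((Complex.le_def.mp ht0).2).symm
  have hwt : star w ⬝ᵥ v = t := by
    rw [hw, Matrix.star_mulVec, hQcP.isHermitian.eq, ← Matrix.dotProduct_mulVec]
  have hkey : μ * t = star w ⬝ᵥ (Jc *ᵥ w) - star w ⬝ᵥ (Rc *ᵥ w) := by
    have h1 : star w ⬝ᵥ (A *ᵥ v) = μ * t := by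
      rw [heig, dotProduct_smul, smul_eq_mul, hwt]
    have h2 : star w ⬝ᵥ (A *ᵥ v) = star w ⬝ᵥ ((Jc - Rc) *ᵥ w) := by
      rw [hAeq, ← Matrix.mulVec_mulVec]
    rw [← h1, h2, Matrix.sub_mulVec, dotProduct_sub]
  have hJre : (star w ⬝ᵥ (Jc *ᵥ w)).re = 0 := by
    set z := star w ⬝ᵥ (Jc *ᵥ w) with hz
    have hconj : star z = -z := by
      calc star z = star (Jc *ᵥ w) ⬝ᵥ star (star w) := by
            rw [hz, star_dotProduct_star]
        _ = (star w ᵥ* Jcᴴ) ⬝ᵥ w := by rw [Matrix.star_mulVec, star_star]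
        _ = star w ⬝ᵥ (Jcᴴ *ᵥ w) := (Matrix.dotProduct_mulVec _ _ _).symm
        _ = star w ⬝ᵥ ((-Jc) *ᵥ w) := by rw [hJskew]
        _ = -z := by rw [Matrix.neg_mulVec, dotProduct_neg]
    have := congrArg Complex.re hconj
    simp only [Complex.star_def, Complex.conj_re, Complex.neg_re] at this
    linarith
  have hRre : 0 ≤ (star w ⬝ᵥ (Rc *ᵥ w)).re := (Complex.le_def.mp (hRcP.dotProduct_mulVec_nonneg w)).1
  have hmul : μ.re * t.re ≤ 0 := by
    have := congrArg Complex.re hkey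
    simp only [Complex.mul_re, Complex.sub_re, htim, mul_zero, sub_zero, hJre, zero_sub] at this
    linarith
  rcases eq_or_lt_of_le htre with h0 | hpos
  · have htz : t = 0 := Complex.ext (by simp [← h0]) (by simp [htim])
    have hwz : w = 0 := (hQcP.dotProduct_mulVec_zero_iff v).mp (by rw [← ht, htz])
    have : μ • v = 0 := by
      rw [← heig, hAeq, ← Matrix.mulVec_mulVec, ← hw, hwz, Matrix.mulVec_zero]
    rcases smul_eq_zero.mp this with hμ0 | hv
    · simp [hμ0]
    · exact absurd hv hv0
  · nlinarith
end

section
/- Let J be skew-symmetric, Q ⪰ 0, R ⪰ 0 be n×n real matrices. If (J − R)Q has a purely imaginary eigenvalue iω with eigenvector x ∈ ℂⁿ, then RQx = 0 and x is also an eigenvector of JQ with eigenvalue iω. -/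
open Matrix ComplexOrder

private lemma map_ofReal_mul {n : ℕ} (A B : Matrix (Fin n) (Fin n) ℝ) :
    (A * B).map (Complex.ofReal ·) =
      A.map (Complex.ofReal ·) * B.map (Complex.ofReal ·) := by
  ext i j
  simp [Matrix.mul_apply, Matrix.map_apply]

private lemma map_ofReal_sub {n : ℕ} (A B : Matrix (Fin n) (Fin n) ℝ) :
    (A - B).map (Complex.ofReal ·) =
      A.map (Complex.ofReal ·) - B.map (Complex.ofReal ·) := by
  ext i j
  simp [Matrix.map_apply, Matrix.sub_apply]

private lemma psd_map {n : ℕ} {M : Matrix (Fin n) (Fin n) ℝ} (h : M.PosSemidef) :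
    (M.map (Complex.ofReal ·)).PosSemidef := by
  obtain ⟨B, rfl⟩ : ∃ B : Matrix (Fin n) (Fin n) ℝ, M = Bᴴ * B := by
    open scoped MatrixOrder in
    obtain ⟨X, hX, -, hXM⟩ := CFC.exists_sqrt_of_isSelfAdjoint_of_quasispectrumRestricts
      h.isHermitian (QuasispectrumRestricts.nnreal_of_nonneg h.nonneg)
    exact ⟨X, by rw [← hXM, ← Matrix.star_eq_conjTranspose, hX.star_eq]⟩
  rw [map_ofReal_mul]
  have : (Bᴴ).map (Complex.ofReal ·) = (B.map (Complex.ofReal ·))ᴴ := by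
    ext i j
    simp [Matrix.conjTranspose_apply, Matrix.map_apply]
  rw [this]
  exact Matrix.posSemidef_conjTranspose_mul_self _

/-- If (J − R)Q has a purely imaginary eigenvalue iω with eigenvector x, then
RQx = 0 and x is an eigenvector of JQ with eigenvalue iω. -/
theorem dh_imaginary_eigenvalue {n : ℕ} (J Q R : Matrix (Fin n) (Fin n) ℝ)
    (hJ : Jᵀ = -J) (hQ : Q.PosSemidef) (hR : R.PosSemidef)
    (ω : ℝ) (x : Fin n → ℂ) (hx : x ≠ 0)
    (heig : (((J - R) * Q).map (Complex.ofReal ·)).mulVec x = (Complex.I * ω) • x) :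
    ((R * Q).map (Complex.ofReal ·)).mulVec x = 0 ∧
    ((J * Q).map (Complex.ofReal ·)).mulVec x = (Complex.I * ω) • x := by
  set Jc := J.map (Complex.ofReal ·) with hJc
  set Qc := Q.map (Complex.ofReal ·) with hQc
  set Rc := R.map (Complex.ofReal ·) with hRc
  have hQcp : Qc.PosSemidef := psd_map hQ
  have hRcp : Rc.PosSemidef := psd_map hR
  have hJskew : Jcᴴ = -Jc := by
    ext i j
    have := congrFun (congrFun hJ j) i
    simp only [Matrix.transpose_apply, Matrix.neg_apply] at this
    simp [hJc, Matrix.conjTranspose_apply, Matrix.map_apply, this]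
  set y : Fin n → ℂ := Qc *ᵥ x with hy
  have hsplit : Jc *ᵥ y - Rc *ᵥ y = (Complex.I * ω) • x := by
    rw [hy, Matrix.mulVec_mulVec, Matrix.mulVec_mulVec, ← Matrix.sub_mulVec,
      ← Matrix.sub_mul, hJc, hRc, hQc, ← map_ofReal_sub, ← map_ofReal_mul]
    exact heig
  have hq : (0 : ℂ) ≤ star x ⬝ᵥ Qc *ᵥ x := hQcp.dotProduct_mulVec_nonneg x
  have hyx : star y ⬝ᵥ x = star x ⬝ᵥ Qc *ᵥ x := by
    rw [hy, Matrix.star_mulVec, hQcp.1.eq, ← Matrix.dotProduct_mulVec]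
  have hs : (0 : ℂ) ≤ star y ⬝ᵥ Rc *ᵥ y := hRcp.dotProduct_mulVec_nonneg y
  have ht : (star y ⬝ᵥ Jc *ᵥ y).re = 0 := by
    have h1 : star (star y ⬝ᵥ Jc *ᵥ y) = -(star y ⬝ᵥ Jc *ᵥ y) := by
      rw [← Matrix.star_dotProduct_star, star_star, Matrix.star_mulVec,
        ← Matrix.dotProduct_mulVec, hJskew, Matrix.neg_mulVec,
        dotProduct_neg]
    have := congrArg Complex.re h1
    simp only [Complex.star_def, Complex.conj_re, Complex.neg_re] at this
    linarith
  have hmain : star y ⬝ᵥ Jc *ᵥ y - star y ⬝ᵥ Rc *ᵥ y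
      = (Complex.I * ω) * (star y ⬝ᵥ x) := by
    rw [← dotProduct_sub, hsplit, dotProduct_smul, smul_eq_mul]
  have hqim : (star x ⬝ᵥ Qc *ᵥ x).im = 0 := by
    have := (Complex.le_def.mp hq).2
    simpa using this.symm
  have hsim : (star y ⬝ᵥ Rc *ᵥ y).im = 0 := by
    have := (Complex.le_def.mp hs).2
    simpa using this.symm
  have hsre : (star y ⬝ᵥ Rc *ᵥ y).re = 0 := by
    have := congrArg Complex.re hmain
    rw [hyx] at this
    simp only [Complex.sub_re, ht, Complex.mul_re, Complex.mul_im, Complex.I_re,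
      Complex.I_im, Complex.ofReal_re, Complex.ofReal_im, hqim] at this
    linarith [this]
  have hszero : star y ⬝ᵥ Rc *ᵥ y = 0 := by
    apply Complex.ext <;> simp [hsre, hsim]
  have hRy : Rc *ᵥ y = 0 := (hRcp.dotProduct_mulVec_zero_iff y).mp hszero
  have hRQx : ((R * Q).map (Complex.ofReal ·)) *ᵥ x = 0 := by
    rw [map_ofReal_mul, ← Matrix.mulVec_mulVec]
    exact hRy
  refine ⟨hRQx, ?_⟩
  have hsum : (J - R) * Q + R * Q = J * Q := by
    rw [Matrix.sub_mul, sub_add_cancel]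
  have hJQ : (J * Q).map (Complex.ofReal ·)
      = ((J - R) * Q).map (Complex.ofReal ·) + (R * Q).map (Complex.ofReal ·) := by
    rw [← hsum]
    ext i j
    simp [Matrix.map_apply, Matrix.add_apply]
  rw [hJQ, Matrix.add_mulVec, heig, hRQx, add_zero]
end

section
/- Let J be skew-symmetric, Q positive semidefinite, and R positive definite (all n×n real matrices). Then (J − R)Q has no nonzero purely imaginary eigenvalues. -/
open Matrix

open scoped ComplexOrder

lemma re_quad {n : ℕ} (M : Matrix (Fin n) (Fin n) ℝ) (x : Fin n → ℂ) :
    (star x ⬝ᵥ (M.map (Complex.ofReal ·)) *ᵥ x).re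
      = (fun i => (x i).re) ⬝ᵥ M *ᵥ (fun i => (x i).re)
        + (fun i => (x i).im) ⬝ᵥ M *ᵥ (fun i => (x i).im) := by
  simp only [dotProduct, mulVec, map_apply, Pi.star_apply, Complex.re_sum, dotProduct,
    Finset.mul_sum, ← Finset.sum_add_distrib]
  congr 1; ext i; congr 1; ext j
  simp [Complex.mul_re, Complex.ofReal_re, Complex.ofReal_im]

lemma herm_map {n : ℕ} {M : Matrix (Fin n) (Fin n) ℝ} (h : Mᵀ = M) :
    (M.map (Complex.ofReal ·)).IsHermitian := by
  ext i j
  simp only [conjTranspose_apply, map_apply, Complex.star_def, Complex.conj_ofReal]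
  exact_mod_cast congrFun (congrFun h i) j

lemma quad_im_zero {n : ℕ} {M : Matrix (Fin n) (Fin n) ℂ} (h : M.IsHermitian) (x : Fin n → ℂ) :
    (star x ⬝ᵥ M *ᵥ x).im = 0 := by
  have hs : star (star x ⬝ᵥ M *ᵥ x) = star x ⬝ᵥ M *ᵥ x := by
    calc star (star x ⬝ᵥ M *ᵥ x) = star (M *ᵥ x) ⬝ᵥ star (star x) :=
          (star_dotProduct_star _ _).symm
      _ = star (M *ᵥ x) ⬝ᵥ x := by rw [star_star]
      _ = (star x ᵥ* Mᴴ) ⬝ᵥ x := by rw [star_mulVec]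
      _ = star x ⬝ᵥ M *ᵥ x := by rw [h.eq, ← dotProduct_mulVec]
  have := congrArg Complex.im hs
  simp only [Complex.star_def, Complex.conj_im] at this
  linarith

lemma posdef_map {n : ℕ} {M : Matrix (Fin n) (Fin n) ℝ} (hM : M.PosDef) :
    (M.map (Complex.ofReal ·)).PosDef := by
  have hH := herm_map hM.1
  refine posDef_iff_dotProduct_mulVec.mpr ⟨hH, fun x hx => ?_⟩
  rw [Complex.lt_def]
  refine ⟨?_, by simpa using (quad_im_zero hH x).symm⟩
  simp only [Complex.zero_re, re_quad]
  have hab : (fun i => (x i).re) ≠ 0 ∨ (fun i => (x i).im) ≠ 0 := by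
    by_contra hc
    push_neg at hc
    apply hx
    ext i
    have h1 := congrFun hc.1 i
    have h2 := congrFun hc.2 i
    simp only [Pi.zero_apply] at h1 h2
    exact Complex.ext h1 h2
  have key : ∀ a : Fin n → ℝ, 0 ≤ a ⬝ᵥ M *ᵥ a := fun a => by
    simpa using hM.posSemidef.dotProduct_mulVec_nonneg a
  have keyp : ∀ a : Fin n → ℝ, a ≠ 0 → 0 < a ⬝ᵥ M *ᵥ a := fun a ha => by
    simpa using hM.dotProduct_mulVec_pos ha
  rcases hab with h | h
  · have := keyp _ h; have := key (fun i => (x i).im); linarith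
  · have := keyp _ h; have := key (fun i => (x i).re); linarith

lemma possemidef_map {n : ℕ} {M : Matrix (Fin n) (Fin n) ℝ} (hM : M.PosSemidef) :
    (M.map (Complex.ofReal ·)).PosSemidef := by
  have hH := herm_map hM.1
  refine posSemidef_iff_dotProduct_mulVec.mpr ⟨hH, fun x => ?_⟩
  rw [Complex.le_def]
  refine ⟨?_, by simpa using (quad_im_zero hH x).symm⟩
  simp only [Complex.zero_re, re_quad]
  have key : ∀ a : Fin n → ℝ, 0 ≤ a ⬝ᵥ M *ᵥ a := fun a => by
    simpa using hM.dotProduct_mulVec_nonneg a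
  have := key (fun i => (x i).re); have := key (fun i => (x i).im); linarith

/-- If J is skew-symmetric, Q ⪰ 0 and R ≻ 0, then (J − R)Q has no nonzero
purely imaginary eigenvalues. -/
theorem dh_no_nonzero_imaginary_eigs {n : ℕ} (J Q R : Matrix (Fin n) (Fin n) ℝ)
    (hJ : Jᵀ = -J) (hQ : Q.PosSemidef) (hR : R.PosDef) :
    ∀ ω : ℝ, ω ≠ 0 →
      (Complex.I * ω) ∉ spectrum ℂ (((J - R) * Q).map (Complex.ofReal ·)) := by
  intro ω hω hmem
  set Jc := J.map (Complex.ofReal ·) with hJc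
  set Rc := R.map (Complex.ofReal ·) with hRc
  set Qc := Q.map (Complex.ofReal ·) with hQc
  have hmap : ((J - R) * Q).map (Complex.ofReal ·) = (Jc - Rc) * Qc := by
    ext i j
    simp [Matrix.mul_apply, Matrix.sub_apply, hJc, hRc, hQc]
  rw [hmap, spectrum.mem_iff] at hmem
  rw [Matrix.isUnit_iff_isUnit_det, isUnit_iff_ne_zero, not_ne_iff,
    ← Matrix.exists_mulVec_eq_zero_iff] at hmem
  obtain ⟨v, hv, hveq⟩ := hmem
  have heig : (Jc - Rc) *ᵥ (Qc *ᵥ v) = (Complex.I * ω) • v := by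
    have h1 : (algebraMap ℂ (Matrix (Fin n) (Fin n) ℂ) (Complex.I * ω)) *ᵥ v
        = (Complex.I * ω) • v := by
      rw [Algebra.algebraMap_eq_smul_one, smul_mulVec, one_mulVec]
    rw [sub_mulVec, h1] at hveq
    rw [mulVec_mulVec]
    exact (sub_eq_zero.mp hveq).symm
  set w := Qc *ᵥ v with hw
  -- Qc is Hermitian, psd; Rc posdef; Jc skew-hermitian
  have hQt : Qᵀ = Q := hQ.1
  have hQcpsd : Qc.PosSemidef := possemidef_map hQ
  have hRcpd : Rc.PosDef := posdef_map hR
  -- star w ⬝ᵥ v = star v ⬝ᵥ w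
  have hq : star w ⬝ᵥ v = star v ⬝ᵥ w := by
    rw [hw, star_mulVec, (herm_map hQt).eq, dotProduct_mulVec]
  -- main identity
  have hs : star w ⬝ᵥ Jc *ᵥ w - star w ⬝ᵥ Rc *ᵥ w = (Complex.I * ω) * (star v ⬝ᵥ w) := by
    have := congrArg (fun u => star w ⬝ᵥ u) heig
    simpa [sub_mulVec, dotProduct_sub, dotProduct_smul, smul_eq_mul, hq] using this
  -- Jc term has zero real part
  have hJherm : Jcᴴ = -Jc := by
    ext i j
    simp only [conjTranspose_apply, map_apply, Complex.star_def, Complex.conj_ofReal, hJc,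
      Matrix.neg_apply]
    have := congrFun (congrFun hJ i) j
    simp only [transpose_apply, Matrix.neg_apply] at this
    exact_mod_cast this
  have hjre : (star w ⬝ᵥ Jc *ᵥ w).re = 0 := by
    have hs2 : star (star w ⬝ᵥ Jc *ᵥ w) = -(star w ⬝ᵥ Jc *ᵥ w) := by
      calc star (star w ⬝ᵥ Jc *ᵥ w) = star (Jc *ᵥ w) ⬝ᵥ star (star w) :=
            (star_dotProduct_star _ _).symm
        _ = star (Jc *ᵥ w) ⬝ᵥ w := by rw [star_star]
        _ = (star w ᵥ* Jcᴴ) ⬝ᵥ w := by rw [star_mulVec]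
        _ = -(star w ⬝ᵥ Jc *ᵥ w) := by
            rw [hJherm, vecMul_neg, neg_dotProduct, ← dotProduct_mulVec]
    have := congrArg Complex.re hs2
    simp only [Complex.star_def, Complex.conj_re, Complex.neg_re] at this
    linarith
  -- star v ⬝ᵥ w is real nonneg
  have hqnn : 0 ≤ star v ⬝ᵥ Qc *ᵥ v := hQcpsd.dotProduct_mulVec_nonneg v
  have hqim : (star v ⬝ᵥ w).im = 0 := (Complex.le_def.mp hqnn).2.symm
  -- real part of RHS is 0
  have hrre : (star w ⬝ᵥ Rc *ᵥ w).re = 0 := by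
    have := congrArg Complex.re hs
    simp only [Complex.sub_re, hjre, zero_sub, Complex.mul_re, Complex.mul_im,
      Complex.I_re, Complex.I_im, Complex.ofReal_re, Complex.ofReal_im, hqim] at this
    linarith [this]
  -- Rc posdef forces w = 0
  have hwz : w = 0 := by
    by_contra hwne
    have := hRcpd.dotProduct_mulVec_pos hwne
    have hre := (Complex.lt_def.mp this).1
    simp only [Complex.zero_re] at hre
    linarith
  -- then (I ω) • v = 0, contradiction
  rw [hwz, mulVec_zero] at heig
  have : (Complex.I * ω) = 0 ∨ v = 0 := smul_eq_zero.mp heig.symm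
  rcases this with h | h
  · exact hω (by simpa [Complex.ext_iff, Complex.I_ne_zero] using h)
  · exact hv h
end

section
/- If X ∈ ℝ^{n×n} satisfies XP + PXᵀ ⪯ 0 for some positive definite P, then X admits a dissipative-Hamiltonian representation X = (J − R)Q with J = (XP − PXᵀ)/2 skew-symmetric, R = (−XP − PXᵀ)/2 positive semidefinite, and Q = P⁻¹ positive definite. -/
open Matrix

/-- Any X with XP + PXᵀ ⪯ 0 for some P ≻ 0 admits a DH representation. -/
theorem dh_representation {n : ℕ} (X P : Matrix (Fin n) (Fin n) ℝ)
    (hP : P.PosDef) (hLyap : (-(X * P + P * Xᵀ)).PosSemidef) :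
    ((2 : ℝ)⁻¹ • (X * P - P * Xᵀ))ᵀ = -((2 : ℝ)⁻¹ • (X * P - P * Xᵀ)) ∧
    ((2 : ℝ)⁻¹ • (-(X * P) - P * Xᵀ)).PosSemidef ∧
    P⁻¹.PosDef ∧
    ((2 : ℝ)⁻¹ • (X * P - P * Xᵀ) - (2 : ℝ)⁻¹ • (-(X * P) - P * Xᵀ)) * P⁻¹ = X := by
  have hPsymm : Pᵀ = P := hP.1
  refine ⟨?_, ?_, hP.inv, ?_⟩
  · rw [transpose_smul, transpose_sub, transpose_mul, transpose_mul, transpose_transpose,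
      hPsymm, ← smul_neg, neg_sub]
  · have h : (-(X * P) - P * Xᵀ) = -(X * P + P * Xᵀ) := by abel
    rw [h]
    refine ⟨?_, fun x => ?_⟩
    · rw [IsHermitian, conjTranspose_smul, hLyap.1.eq]
      simp
    · simp only [Matrix.smul_apply, smul_eq_mul]
      have hc : ∀ a b c' : ℝ, star a * (2⁻¹ * b) * c' = 2⁻¹ * (star a * b * c') := by
        intros; ring
      simp only [hc, ← Finsupp.mul_sum]
      exact mul_nonneg (by norm_num) (hLyap.2 x)
  · have h : ((2 : ℝ)⁻¹ • (X * P - P * Xᵀ) - (2 : ℝ)⁻¹ • (-(X * P) - P * Xᵀ)) = X * P := by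
      rw [← smul_sub]
      have : (X * P - P * Xᵀ - (-(X * P) - P * Xᵀ)) = (2 : ℝ) • (X * P) := by
        rw [two_smul]; abel
      rw [this, smul_smul]
      norm_num
    rw [h, mul_assoc, mul_nonsing_inv _ (isUnit_iff_ne_zero.2 hP.det_pos.ne'), mul_one]
end

section
/- Let J be skew-symmetric, R positive definite with [J − R]_{ij} ≥ 0 for all i ≠ j, and Q a positive definite diagonal matrix. Then X = (J − R)Q is a Hurwitz Metzler matrix. -/
open Matrix

lemma re_dot_map {n : ℕ} (M : Matrix (Fin n) (Fin n) ℝ) (u : Fin n → ℂ) :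
    (star u ⬝ᵥ (M.map (Complex.ofReal ·)) *ᵥ u).re
      = (fun i => (u i).re) ⬝ᵥ M *ᵥ (fun i => (u i).re)
        + (fun i => (u i).im) ⬝ᵥ M *ᵥ (fun i => (u i).im) := by
  simp only [dotProduct, mulVec, Finset.mul_sum, Complex.re_sum, map_apply]
  rw [← Finset.sum_add_distrib]
  refine Finset.sum_congr rfl fun i _ => ?_
  rw [← Finset.sum_add_distrib]
  refine Finset.sum_congr rfl fun j _ => ?_
  simp [Complex.mul_re, Complex.mul_im]

lemma skew_dot {n : ℕ} (J : Matrix (Fin n) (Fin n) ℝ) (hJ : Jᵀ = -J) (c : Fin n → ℝ) :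
    c ⬝ᵥ J *ᵥ c = 0 := by
  have h1 : c ⬝ᵥ Jᵀ *ᵥ c = c ⬝ᵥ J *ᵥ c := by
    rw [dotProduct_comm, mulVec_transpose, ← dotProduct_mulVec]
  rw [hJ] at h1
  simp only [neg_mulVec, dotProduct_neg] at h1
  linarith

/-- If J is skew-symmetric, R ≻ 0, [J − R]_{ij} ≥ 0 for i ≠ j, and Q is a positive
definite diagonal matrix, then X = (J − R)Q is a Hurwitz Metzler matrix. -/
theorem dh_metzler_hurwitz {n : ℕ} (J R : Matrix (Fin n) (Fin n) ℝ)
    (hJ : Jᵀ = -J) (hR : R.PosDef)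
    (hoff : ∀ i j, i ≠ j → 0 ≤ (J - R) i j)
    (d : Fin n → ℝ) (hd : ∀ i, 0 < d i) :
    (∀ i j, i ≠ j → 0 ≤ ((J - R) * Matrix.diagonal d) i j) ∧
    (∀ μ ∈ spectrum ℂ (((J - R) * Matrix.diagonal d).map (Complex.ofReal ·)),
      μ.re < 0) := by
  constructor
  · intro i j hij
    rw [Matrix.mul_diagonal]
    exact mul_nonneg (hoff i j hij) (hd j).le
  · intro μ hμ
    set M := J - R with hM
    set A := ((M * Matrix.diagonal d).map (Complex.ofReal ·)) with hA
    rw [spectrum.mem_iff, Matrix.isUnit_iff_isUnit_det, isUnit_iff_ne_zero, not_not] at hμ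
    obtain ⟨v, hv0, hveq⟩ := (Matrix.exists_mulVec_eq_zero_iff).mpr hμ
    have hAv : A *ᵥ v = μ • v := by
      rw [sub_mulVec] at hveq
      have halg : (algebraMap ℂ (Matrix (Fin n) (Fin n) ℂ) μ) *ᵥ v = μ • v := by
        funext i
        simp [Matrix.algebraMap_eq_diagonal, mulVec_diagonal]
      rw [halg] at hveq
      exact (sub_eq_zero.mp hveq).symm
    set a : Fin n → ℂ := fun i => (d i : ℂ) with ha
    have hAfac : A = (M.map (Complex.ofReal ·)) * Matrix.diagonal a := by
      rw [hA, show ((Complex.ofReal ·) : ℝ → ℂ) = ⇑Complex.ofRealHom from rfl,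
        Matrix.map_mul]
      congr 1
      rw [Matrix.diagonal_map (by simp)]
      rfl
    set u : Fin n → ℂ := fun i => a i * v i with hudef
    have hu : Matrix.diagonal a *ᵥ v = u := by
      funext i
      simp [mulVec_diagonal, hudef]
    have hMcu : (M.map (Complex.ofReal ·)) *ᵥ u = μ • v := by
      rw [← hu, mulVec_mulVec, ← hAfac, hAv]
    set q : ℝ := ∑ i, d i * Complex.normSq (v i) with hqdef
    have hp : star u ⬝ᵥ v = (q : ℂ) := by
      simp only [dotProduct, hqdef, Pi.star_apply, hudef]
      push_cast
      refine Finset.sum_congr rfl fun i _ => ?_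
      simp only [star_mul', Complex.star_def, Complex.conj_ofReal, ha]
      rw [mul_assoc, mul_comm ((starRingEnd ℂ) (v i)), Complex.mul_conj]
    obtain ⟨i0, hvi0⟩ := Function.ne_iff.mp hv0
    have hvi0 : v i0 ≠ 0 := hvi0
    have hqpos : 0 < q := by
      refine Finset.sum_pos' (fun i _ => mul_nonneg (hd i).le (Complex.normSq_nonneg _))
        ⟨i0, Finset.mem_univ _, mul_pos (hd i0) (Complex.normSq_pos.mpr hvi0)⟩
    have hui0 : u i0 ≠ 0 := mul_ne_zero (by simp [ha]; exact (hd i0).ne') hvi0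
    have hs : star u ⬝ᵥ (M.map (Complex.ofReal ·)) *ᵥ u = μ * (q : ℂ) := by
      rw [hMcu, dotProduct_smul, smul_eq_mul, hp]
    -- real part via decomposition
    set ar : Fin n → ℝ := fun i => (u i).re with har
    set ai : Fin n → ℝ := fun i => (u i).im with hai
    have hre : (star u ⬝ᵥ (M.map (Complex.ofReal ·)) *ᵥ u).re
        = -(ar ⬝ᵥ R *ᵥ ar + ai ⬝ᵥ R *ᵥ ai) := by
      rw [re_dot_map]
      rw [hM]
      simp only [sub_mulVec, dotProduct_sub, skew_dot J hJ, ← har, ← hai]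
      ring
    have hRsemi : ∀ c : Fin n → ℝ, 0 ≤ c ⬝ᵥ R *ᵥ c := by
      intro c
      simpa using hR.posSemidef.dotProduct_mulVec_nonneg c
    have hRpos : ∀ c : Fin n → ℝ, c ≠ 0 → 0 < c ⬝ᵥ R *ᵥ c := by
      intro c hc
      simpa using hR.dotProduct_mulVec_pos hc
    have hne : ar ≠ 0 ∨ ai ≠ 0 := by
      by_contra h
      push_neg at h
      apply hui0
      have h1 := congrFun h.1 i0
      have h2 := congrFun h.2 i0
      simp only [har, hai, Pi.zero_apply] at h1 h2
      exact Complex.ext h1 h2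
    have hneg : (star u ⬝ᵥ (M.map (Complex.ofReal ·)) *ᵥ u).re < 0 := by
      rw [hre]
      rcases hne with h | h
      · nlinarith [hRpos ar h, hRsemi ai]
      · nlinarith [hRpos ai h, hRsemi ar]
    rw [hs] at hneg
    have : (μ * (q : ℂ)).re = μ.re * q := by
      simp [Complex.mul_re]
    rw [this] at hneg
    nlinarith
end
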